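/- Under the same maximal-volume assumption, the cross approximation satisfies the improved bound ‖A − A_r‖_C ≤ (r+1)·σ_{r+1}(A) / √(1 + Σ_{k=1}^{r} σ_{r+1}(A)²/σ_k(A)²). -/

import Mathlib

open Matrix BigOperators Filter

theorem Matrix.isHermitian_transpose_mul_self {m n : Type*} [Fintype m]
    (A : Matrix m n ℝ) : (Aᵀ * A).IsHermitian := by
  simpa using Matrix.isHermitian_conjTranspose_mul_self A

noncomputable def sval {m n : ℕ} (A : Matrix (Fin m) (Fin n) ℝ) (k : Fin n) : ℝ :=
  Real.sqrt ((Matrix.isHermitian_transpose_mul_self A).eigenvalues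
    (Tuple.sort (Matrix.isHermitian_transpose_mul_self A).eigenvalues (Fin.rev k)))

noncomputable def chebNorm {m n : ℕ} (A : Matrix (Fin m) (Fin n) ℝ) : ℝ :=
  ⨆ i, ⨆ j, |A i j|

noncomputable def frobNorm {m n : ℕ} (A : Matrix (Fin m) (Fin n) ℝ) : ℝ :=
  Real.sqrt (∑ i, ∑ j, (A i j) ^ 2)

open scoped RealInnerProductSpace

namespace CrossAux

variable {p : ℕ} {M : Matrix (Fin p) (Fin p) ℝ} (hM : M.IsHermitian)

lemma inner_eq_dot (x y : EuclideanSpace ℝ (Fin p)) : ⟪x, y⟫ = x ⬝ᵥ y := by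
  simp [PiLp.inner_apply, dotProduct, RCLike.inner_apply, mul_comm]

lemma transpose_eq (hM : M.IsHermitian) : Mᵀ = M := by
  ext i j
  have := congrFun (congrFun hM.eq i) j
  simpa [Matrix.conjTranspose_apply] using this

lemma repr_mulVec (x : EuclideanSpace ℝ (Fin p)) (i : Fin p) :
    hM.eigenvectorBasis.repr (WithLp.toLp 2 (M *ᵥ x)) i = hM.eigenvalues i * hM.eigenvectorBasis.repr x i := by
  rw [OrthonormalBasis.repr_apply_apply, OrthonormalBasis.repr_apply_apply,
    inner_eq_dot, inner_eq_dot, WithLp.ofLp_toLp, dotProduct_mulVec]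
  have h1 : Matrix.vecMul (hM.eigenvectorBasis i) M
      = hM.eigenvalues i • (hM.eigenvectorBasis i) := by
    have h3 := Matrix.vecMul_transpose (A := M) (x := hM.eigenvectorBasis i)
    rw [transpose_eq hM] at h3
    rw [h3]
    exact hM.mulVec_eigenvectorBasis i
  rw [h1, smul_dotProduct]
  rfl

lemma dot_mulVec_eq_sum (x : EuclideanSpace ℝ (Fin p)) :
    x ⬝ᵥ (M *ᵥ x) = ∑ i, hM.eigenvalues i * (hM.eigenvectorBasis.repr x i)^2 := by
  rw [← inner_eq_dot, ← hM.eigenvectorBasis.repr.inner_map_map x (WithLp.toLp 2 (M *ᵥ x)), inner_eq_dot]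
  simp only [dotProduct]
  refine Finset.sum_congr rfl fun i _ => ?_
  rw [repr_mulVec hM x i]; ring

lemma dot_self_eq_sum (x : EuclideanSpace ℝ (Fin p)) :
    x ⬝ᵥ x = ∑ i, (hM.eigenvectorBasis.repr x i)^2 := by
  rw [← inner_eq_dot, ← hM.eigenvectorBasis.repr.inner_map_map x x, inner_eq_dot]
  simp only [dotProduct]
  exact Finset.sum_congr rfl fun i _ => by ring

lemma repr_eq_zero_of_span {S : Finset (Fin p)} {x : EuclideanSpace ℝ (Fin p)}
    (hx : x ∈ Submodule.span ℝ (hM.eigenvectorBasis '' S)) {i : Fin p} (hi : i ∉ S) :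
    hM.eigenvectorBasis.repr x i = 0 := by
  induction hx using Submodule.span_induction with
  | mem y hy =>
      obtain ⟨j, hj, rfl⟩ := hy
      rw [OrthonormalBasis.repr_self, EuclideanSpace.single_apply]
      exact if_neg (fun h => hi (by rw [h]; exact hj))
  | zero => simp
  | add y z _ _ hy hz => rw [_root_.map_add]; simp [hy, hz]
  | smul a y _ hy => rw [_root_.map_smul]; simp [hy]

lemma finrank_span_eigen (S : Finset (Fin p)) :
    Module.finrank ℝ (Submodule.span ℝ (hM.eigenvectorBasis '' S)) = S.card := by
  have li : LinearIndependent ℝ (fun s : S => hM.eigenvectorBasis s) :=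
    (hM.eigenvectorBasis.orthonormal.linearIndependent).comp _ Subtype.val_injective
  have h := finrank_span_eq_card li
  rw [show Set.range (fun s : S => hM.eigenvectorBasis s) = hM.eigenvectorBasis '' S by
        rw [Set.image_eq_range]; rfl] at h
  rw [h, Fintype.card_coe]

lemma rayleigh_le_of_mem {S : Finset (Fin p)} {c : ℝ}
    (hS : ∀ i ∈ S, hM.eigenvalues i ≤ c) {x : EuclideanSpace ℝ (Fin p)}
    (hx : x ∈ Submodule.span ℝ (hM.eigenvectorBasis '' S)) :
    x ⬝ᵥ (M *ᵥ x) ≤ c * (x ⬝ᵥ x) := by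
  rw [dot_mulVec_eq_sum hM, dot_self_eq_sum hM, Finset.mul_sum]
  rw [← Finset.sum_subset (Finset.subset_univ S)
      (fun i _ hi => by rw [repr_eq_zero_of_span hM hx hi]; ring),
    ← Finset.sum_subset (Finset.subset_univ S)
      (fun i _ hi => by rw [repr_eq_zero_of_span hM hx hi]; ring)]
  exact Finset.sum_le_sum fun i hi =>
    mul_le_mul_of_nonneg_right (hS i hi) (sq_nonneg _)

lemma rayleigh_ge_of_mem {S : Finset (Fin p)} {c : ℝ}
    (hS : ∀ i ∈ S, c ≤ hM.eigenvalues i) {x : EuclideanSpace ℝ (Fin p)}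
    (hx : x ∈ Submodule.span ℝ (hM.eigenvectorBasis '' S)) :
    c * (x ⬝ᵥ x) ≤ x ⬝ᵥ (M *ᵥ x) := by
  rw [dot_mulVec_eq_sum hM, dot_self_eq_sum hM, Finset.mul_sum]
  rw [← Finset.sum_subset (Finset.subset_univ S)
      (fun i _ hi => by rw [repr_eq_zero_of_span hM hx hi]; ring),
    ← Finset.sum_subset (Finset.subset_univ S)
      (fun i _ hi => by rw [repr_eq_zero_of_span hM hx hi]; ring)]
  exact Finset.sum_le_sum fun i hi =>
    mul_le_mul_of_nonneg_right (hS i hi) (sq_nonneg _)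


lemma dot_self_pos {x : EuclideanSpace ℝ (Fin p)} (hx : x ≠ 0) : 0 < x ⬝ᵥ x := by
  rw [← inner_eq_dot, real_inner_self_eq_norm_sq]
  exact pow_pos (norm_pos_iff.mpr hx) 2

lemma cf_upper (k : Fin p) (c : ℝ) (W : Submodule ℝ (EuclideanSpace ℝ (Fin p)))
    (hdim : k.1 + 1 ≤ Module.finrank ℝ W)
    (hq : ∀ x : EuclideanSpace ℝ (Fin p), x ∈ W → c * (x ⬝ᵥ x) ≤ x ⬝ᵥ (M *ᵥ x)) :
    c ≤ hM.eigenvalues (Tuple.sort hM.eigenvalues (Fin.rev k)) := by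
  classical
  set S : Finset (Fin p) := (Finset.Iic (Fin.rev k)).image (Tuple.sort hM.eigenvalues) with hS
  set U := Submodule.span ℝ (hM.eigenvectorBasis '' S) with hU
  have hcardS : S.card = p - k.1 := by
    rw [hS, Finset.card_image_of_injective _ (Tuple.sort hM.eigenvalues).injective,
      Fin.card_Iic]
    have := k.2
    simp only [Fin.val_rev]
    omega
  have hdimU : Module.finrank ℝ U = p - k.1 := by rw [hU, finrank_span_eigen hM, hcardS]
  -- intersection is nontrivial
  have htot : Module.finrank ℝ (EuclideanSpace ℝ (Fin p)) = p := finrank_euclideanSpace_fin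
  have hsup : Module.finrank ℝ (W ⊔ U : Submodule ℝ (EuclideanSpace ℝ (Fin p))) ≤ p :=
    le_trans (Submodule.finrank_le _) (le_of_eq htot)
  have hsum := Submodule.finrank_sup_add_finrank_inf_eq W U
  have hpos : 0 < Module.finrank ℝ (W ⊓ U : Submodule ℝ (EuclideanSpace ℝ (Fin p))) := by
    omega
  have hne : (W ⊓ U : Submodule ℝ (EuclideanSpace ℝ (Fin p))) ≠ ⊥ := by
    intro h
    rw [h, finrank_bot] at hpos
    omega
  obtain ⟨x, hxWU, hx0⟩ := Submodule.exists_mem_ne_zero_of_ne_bot hne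
  have hxW : x ∈ W := hxWU.1
  have hxU : x ∈ U := hxWU.2
  have h1 : c * (x ⬝ᵥ x) ≤ x ⬝ᵥ (M *ᵥ x) := hq x hxW
  have h2 : x ⬝ᵥ (M *ᵥ x) ≤ hM.eigenvalues (Tuple.sort hM.eigenvalues (Fin.rev k)) * (x ⬝ᵥ x) := by
    refine rayleigh_le_of_mem hM (fun i hi => ?_) hxU
    rw [hS] at hi
    obtain ⟨j, hj, rfl⟩ := Finset.mem_image.mp hi
    exact Tuple.monotone_sort hM.eigenvalues (Finset.mem_Iic.mp hj)
  exact le_of_mul_le_mul_right (h1.trans h2) (dot_self_pos hx0)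

lemma cf_low (k : Fin p) :
    ∃ W : Submodule ℝ (EuclideanSpace ℝ (Fin p)), Module.finrank ℝ W = k.1 + 1 ∧
      ∀ x : EuclideanSpace ℝ (Fin p), x ∈ W →
        hM.eigenvalues (Tuple.sort hM.eigenvalues (Fin.rev k)) * (x ⬝ᵥ x) ≤ x ⬝ᵥ (M *ᵥ x) := by
  classical
  set S : Finset (Fin p) := (Finset.Ici (Fin.rev k)).image (Tuple.sort hM.eigenvalues) with hS
  refine ⟨Submodule.span ℝ (hM.eigenvectorBasis '' S), ?_, ?_⟩
  · rw [finrank_span_eigen hM, hS,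
      Finset.card_image_of_injective _ (Tuple.sort hM.eigenvalues).injective, Fin.card_Ici]
    have := k.2
    simp only [Fin.val_rev]
    omega
  · intro x hx
    refine rayleigh_ge_of_mem hM (fun i hi => ?_) hx
    rw [hS] at hi
    obtain ⟨j, hj, rfl⟩ := Finset.mem_image.mp hi
    exact Tuple.monotone_sort hM.eigenvalues (Finset.mem_Ici.mp hj)


/-- extension by zero along `g` -/
noncomputable def extL {q n : ℕ} (g : Fin q → Fin n) :
    EuclideanSpace ℝ (Fin q) →ₗ[ℝ] EuclideanSpace ℝ (Fin n) where
  toFun x := WithLp.toLp 2 (fun j => ∑ t, if j = g t then x t else 0)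
  map_add' x y := by
    ext j
    simp only [PiLp.add_apply]
    rw [← Finset.sum_add_distrib]
    refine Finset.sum_congr rfl fun t _ => ?_
    split <;> simp
  map_smul' a x := by
    ext j
    simp only [PiLp.smul_apply, RingHom.id_apply, smul_eq_mul, Finset.mul_sum]
    refine Finset.sum_congr rfl fun t _ => ?_
    split <;> simp

lemma extL_apply_g {q n : ℕ} {g : Fin q → Fin n} (hg : Function.Injective g)
    (x : EuclideanSpace ℝ (Fin q)) (t : Fin q) : extL g x (g t) = x t := by
  simp only [extL, LinearMap.coe_mk, AddHom.coe_mk, WithLp.ofLp_toLp]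
  rw [Finset.sum_eq_single t]
  · simp
  · intro b _ hb
    exact if_neg (fun h => hb (hg h.symm))
  · intro h
    exact absurd (Finset.mem_univ t) h

lemma extL_apply_notin {q n : ℕ} {g : Fin q → Fin n} (x : EuclideanSpace ℝ (Fin q))
    {j : Fin n} (hj : ∀ t, j ≠ g t) : extL g x j = 0 := by
  simp only [extL, LinearMap.coe_mk, AddHom.coe_mk, WithLp.ofLp_toLp]
  exact Finset.sum_eq_zero fun t _ => if_neg (hj t)

lemma extL_injective {q n : ℕ} {g : Fin q → Fin n} (hg : Function.Injective g) :
    Function.Injective (extL (n := n) g) := by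
  intro x y h
  ext t
  have := congrArg (fun v : EuclideanSpace ℝ (Fin n) => v (g t)) h
  rwa [show (extL g x) (g t) = x t from extL_apply_g hg x t,
    show (extL g y) (g t) = y t from extL_apply_g hg y t] at this

lemma dot_extL {q n : ℕ} {g : Fin q → Fin n} (hg : Function.Injective g)
    (x : EuclideanSpace ℝ (Fin q)) : (extL g x) ⬝ᵥ (extL g x) = x ⬝ᵥ x := by
  classical
  unfold dotProduct
  rw [← Finset.sum_subset (Finset.subset_univ (Finset.univ.image g))
      (fun j _ hj => by
        rw [extL_apply_notin x (fun t ht => hj (Finset.mem_image.mpr ⟨t, Finset.mem_univ t, ht.symm⟩))]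
        ring),
    Finset.sum_image (fun a _ b _ hab => hg hab)]
  exact Finset.sum_congr rfl fun t _ => by rw [extL_apply_g hg x t]

lemma mulVec_extL {q m n : ℕ} (A : Matrix (Fin m) (Fin n) ℝ) {g : Fin q → Fin n}
    (x : EuclideanSpace ℝ (Fin q)) :
    A *ᵥ (extL g x) = (A.submatrix id g) *ᵥ x := by
  funext i
  simp only [mulVec, dotProduct, extL, LinearMap.coe_mk, AddHom.coe_mk, WithLp.ofLp_toLp, submatrix_apply, id_eq]
  calc ∑ j, A i j * ∑ t, (if j = g t then x t else 0)
      = ∑ j, ∑ t, A i j * (if j = g t then x t else 0) := by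
        exact Finset.sum_congr rfl fun j _ => Finset.mul_sum _ _ _
    _ = ∑ t, ∑ j, A i j * (if j = g t then x t else 0) := Finset.sum_comm
    _ = ∑ t, A i (g t) * x t := by
        refine Finset.sum_congr rfl fun t _ => ?_
        simp only [mul_ite, mul_zero]
        rw [Finset.sum_ite_eq' Finset.univ (g t) (fun j => A i j * x t)]
        simp

lemma dot_tmul {a b : ℕ} (C : Matrix (Fin a) (Fin b) ℝ) (x : Fin b → ℝ) :
    x ⬝ᵥ ((Cᵀ * C) *ᵥ x) = (C *ᵥ x) ⬝ᵥ (C *ᵥ x) := by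
  rw [← mulVec_mulVec, dotProduct_mulVec, vecMul_transpose]

noncomputable def evs {m n : ℕ} (A : Matrix (Fin m) (Fin n) ℝ) : Fin n → ℝ :=
  fun j => (Matrix.isHermitian_transpose_mul_self A).eigenvalues
    (Tuple.sort (Matrix.isHermitian_transpose_mul_self A).eigenvalues j)

lemma evs_monotone {m n : ℕ} (A : Matrix (Fin m) (Fin n) ℝ) : Monotone (evs A) :=
  Tuple.monotone_sort _

lemma evs_nonneg {m n : ℕ} (A : Matrix (Fin m) (Fin n) ℝ) (j : Fin n) : 0 ≤ evs A j := by
  have hps : (Aᵀ * A).PosSemidef := Matrix.posSemidef_conjTranspose_mul_self A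
  exact hps.eigenvalues_nonneg _

lemma evs_submatrix_le {m n q : ℕ} (A : Matrix (Fin m) (Fin n) ℝ)
    (f : Fin q → Fin m) (g : Fin q → Fin n) (hf : Function.Injective f)
    (hg : Function.Injective g) (k : Fin q) (hk : k.1 < n) :
    evs (A.submatrix f g) (Fin.rev k) ≤ evs A (Fin.rev (⟨k.1, hk⟩ : Fin n)) := by
  classical
  set B := A.submatrix f g with hB
  obtain ⟨W₀, hW₀d, hW₀⟩ := cf_low (Matrix.isHermitian_transpose_mul_self B) k
  set L := extL (n := n) g with hL
  refine cf_upper (Matrix.isHermitian_transpose_mul_self A) ⟨k.1, hk⟩ _ (W₀.map L) ?_ ?_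
  · have : Module.finrank ℝ (W₀.map L) = Module.finrank ℝ W₀ :=
      (LinearEquiv.finrank_eq (Submodule.equivMapOfInjective L (extL_injective hg) W₀)).symm
    rw [this, hW₀d]
  · rintro y ⟨x, hx, rfl⟩
    calc evs B (Fin.rev k) * (L x ⬝ᵥ L x)
        = evs B (Fin.rev k) * (x ⬝ᵥ x) := by rw [dot_extL hg]
      _ ≤ x ⬝ᵥ ((Bᵀ * B) *ᵥ x) := hW₀ x hx
      _ = (B *ᵥ x) ⬝ᵥ (B *ᵥ x) := dot_tmul B x
      _ ≤ ((A.submatrix id g) *ᵥ x) ⬝ᵥ ((A.submatrix id g) *ᵥ x) := by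
          have hrow : ∀ i : Fin q, (B *ᵥ x) i = ((A.submatrix id g) *ᵥ x) (f i) := by
            intro i; rfl
          unfold dotProduct
          calc ∑ i, (B *ᵥ x) i * (B *ᵥ x) i
              = ∑ i, ((A.submatrix id g) *ᵥ x) (f i) * ((A.submatrix id g) *ᵥ x) (f i) := by
                refine Finset.sum_congr rfl fun i _ => by rw [hrow]
            _ = ∑ j ∈ Finset.univ.image f,
                  ((A.submatrix id g) *ᵥ x) j * ((A.submatrix id g) *ᵥ x) j := by
                rw [Finset.sum_image (fun a _ b _ hab => hf hab)]
            _ ≤ ∑ j, ((A.submatrix id g) *ᵥ x) j * ((A.submatrix id g) *ᵥ x) j := by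
                refine Finset.sum_le_sum_of_subset_of_nonneg (Finset.subset_univ _)
                  (fun j _ _ => mul_self_nonneg _)
      _ = (A *ᵥ (L x)) ⬝ᵥ (A *ᵥ (L x)) := by rw [mulVec_extL A x]
      _ = (L x) ⬝ᵥ ((Aᵀ * A) *ᵥ (L x)) := (dot_tmul A (L x)).symm


lemma trace_inv_conj {q : ℕ} (lam : Fin q → ℝ) (V : Matrix (Fin q) (Fin q) ℝ)
    (h1 : star V * V = 1) (h2 : V * star V = 1) (h0 : ∀ i, lam i ≠ 0) :
    Matrix.trace ((V * Matrix.diagonal lam * star V)⁻¹) = ∑ i, (lam i)⁻¹ := by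
  have hVinv : V⁻¹ = star V := Matrix.inv_eq_left_inv h1
  have hsVinv : (star V)⁻¹ = V := Matrix.inv_eq_left_inv h2
  rw [Matrix.mul_inv_rev, Matrix.mul_inv_rev, hVinv, hsVinv, ← Matrix.mul_assoc,
    Matrix.trace_mul_cycle, h1, Matrix.one_mul]
  have hD : (Matrix.diagonal lam)⁻¹ = Matrix.diagonal (fun i => (lam i)⁻¹) :=
    Matrix.inv_eq_left_inv (by
      rw [Matrix.diagonal_mul_diagonal,
        show (fun i => (lam i)⁻¹ * lam i) = fun _ => 1 from funext fun i => inv_mul_cancel₀ (h0 i),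
        Matrix.diagonal_one])
  rw [hD, Matrix.trace_diagonal]

lemma hermitian_trace_inv {q : ℕ} {H : Matrix (Fin q) (Fin q) ℝ} (hH : H.IsHermitian)
    (h0 : ∀ i, hH.eigenvalues i ≠ 0) :
    Matrix.trace H⁻¹ = ∑ i, (hH.eigenvalues i)⁻¹ := by
  classical
  have hVmem := (Matrix.IsHermitian.eigenvectorUnitary hH).2
  have hspec := hH.spectral_theorem
  rw [show (RCLike.ofReal : ℝ → ℝ) = id from rfl, Function.id_comp, Unitary.conjStarAlgAut_apply] at hspec
  have := trace_inv_conj hH.eigenvalues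
    ((Matrix.IsHermitian.eigenvectorUnitary hH : Matrix (Fin q) (Fin q) ℝ)) hVmem.1 hVmem.2 h0
  rw [← hspec] at this
  exact this

lemma real_conjT {a b : ℕ} (M : Matrix (Fin a) (Fin b) ℝ) : Mᴴ = Mᵀ := by
  ext i j
  simp [Matrix.conjTranspose_apply]

lemma trace_inv_gram {q : ℕ} (B : Matrix (Fin q) (Fin q) ℝ) :
    Matrix.trace ((Bᵀ * B)⁻¹) = ∑ k, ∑ l, (B⁻¹ k l)^2 := by
  rw [Matrix.mul_inv_rev, ← Matrix.transpose_nonsing_inv]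
  simp only [Matrix.trace, Matrix.diag_apply, Matrix.mul_apply, Matrix.transpose_apply]
  exact Finset.sum_congr rfl fun k _ => Finset.sum_congr rfl fun l _ => by ring

lemma evs_pos_of_det_ne_zero {q : ℕ} {B : Matrix (Fin q) (Fin q) ℝ}
    (hdet : B.det ≠ 0) (j : Fin q) : 0 < evs B j := by
  rcases lt_or_eq_of_le (evs_nonneg B j) with h | h
  · exact h
  · exfalso
    have hprod : ∏ i, (Matrix.isHermitian_transpose_mul_self B).eigenvalues i
        = (Bᵀ * B).det := by
      have := (Matrix.isHermitian_transpose_mul_self B).det_eq_prod_eigenvalues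
      simpa using this.symm
    have hned : (Bᵀ * B).det ≠ 0 := by
      rw [Matrix.det_mul, Matrix.det_transpose]
      exact mul_ne_zero hdet hdet
    rw [← hprod] at hned
    exact hned (Finset.prod_eq_zero (Finset.mem_univ
      (Tuple.sort (Matrix.isHermitian_transpose_mul_self B).eigenvalues j)) h.symm)

lemma sum_inv_eigs_eq {q : ℕ} (B : Matrix (Fin q) (Fin q) ℝ) :
    ∑ i, ((Matrix.isHermitian_transpose_mul_self B).eigenvalues i)⁻¹
      = ∑ k : Fin q, (evs B (Fin.rev k))⁻¹ := by
  rw [← Equiv.sum_comp (Tuple.sort (Matrix.isHermitian_transpose_mul_self B).eigenvalues)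
    (fun i => ((Matrix.isHermitian_transpose_mul_self B).eigenvalues i)⁻¹)]
  exact (Equiv.sum_comp (Fin.revPerm) (fun j => (evs B j)⁻¹)).symm


lemma snoc_injective {r m : ℕ} {f : Fin r → Fin m} (hf : Function.Injective f)
    {i : Fin m} (hi : i ∉ Set.range f) :
    Function.Injective (Fin.snoc f i : Fin (r+1) → Fin m) := by
  intro a b h
  induction a using Fin.lastCases with
  | last =>
    induction b using Fin.lastCases with
    | last => rfl
    | cast b =>
      rw [Fin.snoc_last, Fin.snoc_castSucc] at h
      exact absurd ⟨b, h.symm⟩ hi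
  | cast a =>
    induction b using Fin.lastCases with
    | last =>
      rw [Fin.snoc_last, Fin.snoc_castSucc] at h
      exact absurd ⟨a, h⟩ hi
    | cast b =>
      rw [Fin.snoc_castSucc, Fin.snoc_castSucc] at h
      rw [hf h]

section Schur

variable {m n r : ℕ} (A : Matrix (Fin m) (Fin n) ℝ) (I : Fin r → Fin m) (J : Fin r → Fin n)

lemma det_snoc_eq (hinv : IsUnit (A.submatrix I J)) (i : Fin m) (j : Fin n) :
    (A.submatrix (Fin.snoc I i) (Fin.snoc J j)).det
      = (A.submatrix I J).det
        * (A - A.submatrix id J * (A.submatrix I J)⁻¹ * A.submatrix I id) i j := by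
  classical
  have hdetU : IsUnit (A.submatrix I J).det := (Matrix.isUnit_iff_isUnit_det _).mp hinv
  letI : Invertible (A.submatrix I J) := (A.submatrix I J).invertibleOfIsUnitDet hdetU
  have heq : (A.submatrix (Fin.snoc I i) (Fin.snoc J j)).det
      = (Matrix.fromBlocks (A.submatrix I J)
          (Matrix.of fun t (_ : Fin 1) => A (I t) j)
          (Matrix.of fun (_ : Fin 1) s => A i (J s))
          (Matrix.of fun (_ : Fin 1) (_ : Fin 1) => A i j)).det := by
    rw [← Matrix.det_submatrix_equiv_self (finSumFinEquiv (m := r) (n := 1))]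
    congr 1
    ext x y
    have hr : ∀ z : Fin 1, (finSumFinEquiv (Sum.inr z) : Fin (r+1)) = Fin.last r := by
      intro z
      ext
      simp [finSumFinEquiv, Fin.ext_iff]
    have hl : ∀ z : Fin r, (finSumFinEquiv (Sum.inl z) : Fin (r+1)) = Fin.castSucc z := by
      intro z; rfl
    rcases x with x | x <;> rcases y with y | y <;>
      simp [hr, hl, Fin.snoc_castSucc, Fin.snoc_last]
  rw [heq, Matrix.det_fromBlocks₁₁, Matrix.invOf_eq_nonsing_inv, Matrix.det_fin_one]
  congr 1

lemma entry_row_zero (hinv : IsUnit (A.submatrix I J)) (t : Fin r) (j : Fin n) :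
    (A - A.submatrix id J * (A.submatrix I J)⁻¹ * A.submatrix I id) (I t) j = 0 := by
  have hdetU : IsUnit (A.submatrix I J).det := (Matrix.isUnit_iff_isUnit_det _).mp hinv
  have key : (A.submatrix id J * (A.submatrix I J)⁻¹ * A.submatrix I id) (I t) j
      = ((A.submatrix I J) * (A.submatrix I J)⁻¹ * A.submatrix I id) t j := by
    simp [Matrix.mul_apply, Matrix.submatrix_apply]
  rw [Matrix.sub_apply, key, Matrix.mul_nonsing_inv _ hdetU, Matrix.one_mul]
  simp

lemma entry_col_zero (hinv : IsUnit (A.submatrix I J)) (i : Fin m) (s : Fin r) :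
    (A - A.submatrix id J * (A.submatrix I J)⁻¹ * A.submatrix I id) i (J s) = 0 := by
  have hdetU : IsUnit (A.submatrix I J).det := (Matrix.isUnit_iff_isUnit_det _).mp hinv
  have key : (A.submatrix id J * (A.submatrix I J)⁻¹ * A.submatrix I id) i (J s)
      = (A.submatrix id J * ((A.submatrix I J)⁻¹ * (A.submatrix I J))) i s := by
    simp only [Matrix.mul_apply, Matrix.submatrix_apply, Finset.sum_mul, Matrix.mul_assoc]
    rw [Finset.sum_comm]
    exact Finset.sum_congr rfl fun x _ => by
      rw [Finset.mul_sum]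
      exact Finset.sum_congr rfl fun y _ => mul_assoc _ _ _
  rw [Matrix.sub_apply, key, Matrix.nonsing_inv_mul _ hdetU, Matrix.mul_one]
  simp

end Schur

end CrossAux

open CrossAux in
theorem stmt10 {m n r : ℕ} (hrm : r < m) (hrn : r < n)
    (A : Matrix (Fin m) (Fin n) ℝ) (I : Fin r → Fin m) (J : Fin r → Fin n)
    (hI : Function.Injective I) (hJ : Function.Injective J)
    (hinv : IsUnit (A.submatrix I J))
    (hmax : ∀ (I' : Fin r → Fin m) (J' : Fin r → Fin n),
      Function.Injective I' → Function.Injective J' →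
        |(A.submatrix I' J').det| ≤ |(A.submatrix I J).det|) :
    chebNorm (A - A.submatrix id J * (A.submatrix I J)⁻¹ * A.submatrix I id)
      ≤ (r + 1) * sval A ⟨r, hrn⟩ / Real.sqrt (1 + ∑ k : Fin r, sval A ⟨r, hrn⟩ ^ 2 / sval A ⟨k.1, lt_trans k.2 hrn⟩ ^ 2) := by
  classical
  have hm0 : 0 < m := lt_of_le_of_lt (Nat.zero_le r) hrm
  have hn0 : 0 < n := lt_of_le_of_lt (Nat.zero_le r) hrn
  set E := A - A.submatrix id J * (A.submatrix I J)⁻¹ * A.submatrix I id with hE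
  set σ : ℝ := sval A ⟨r, hrn⟩ with hσ
  set S : ℝ := 1 + ∑ k : Fin r, σ ^ 2 / sval A ⟨k.1, lt_trans k.2 hrn⟩ ^ 2 with hSdef
  have hσ0 : 0 ≤ σ := Real.sqrt_nonneg _
  have hS1 : (1:ℝ) ≤ S := by
    rw [hSdef]
    refine le_add_of_nonneg_right (Finset.sum_nonneg fun k _ => div_nonneg (sq_nonneg _) (sq_nonneg _))
  have hSpos : 0 < S := lt_of_lt_of_le one_pos hS1
  have hsqrtS : 0 < Real.sqrt S := Real.sqrt_pos.mpr hSpos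
  have hRHS0 : 0 ≤ (↑r + 1) * σ / Real.sqrt S :=
    div_nonneg (mul_nonneg (by positivity : (0:ℝ) ≤ ↑r + 1) hσ0) (Real.sqrt_nonneg _)
  have hdU : (A.submatrix I J).det ≠ 0 :=
    ((Matrix.isUnit_iff_isUnit_det _).mp hinv).ne_zero
  set d : ℝ := |(A.submatrix I J).det| with hd
  have hd0 : 0 < d := abs_pos.mpr hdU
  have hentry : ∀ (i : Fin m) (j : Fin n), |E i j| ≤ (↑r + 1) * σ / Real.sqrt S := by
    intro i j
    by_cases hi : i ∈ Set.range I
    · obtain ⟨t, rfl⟩ := hi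
      rw [hE, entry_row_zero A I J hinv t j, abs_zero]
      exact hRHS0
    by_cases hj : j ∈ Set.range J
    · obtain ⟨s, rfl⟩ := hj
      rw [hE, entry_col_zero A I J hinv i s, abs_zero]
      exact hRHS0
    have hIp : Function.Injective (Fin.snoc I i : Fin (r+1) → Fin m) := snoc_injective hI hi
    have hJp : Function.Injective (Fin.snoc J j : Fin (r+1) → Fin n) := snoc_injective hJ hj
    set B := A.submatrix (Fin.snoc I i) (Fin.snoc J j) with hB
    have hdet : B.det = (A.submatrix I J).det * E i j := by
      rw [hB, hE]; exact det_snoc_eq A I J hinv i j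
    by_cases hB0 : B.det = 0
    · have hE0 : E i j = 0 := by
        have h := hdet
        rw [hB0] at h
        exact ((mul_eq_zero.mp h.symm).resolve_left hdU)
      rw [hE0, abs_zero]
      exact hRHS0
    · have hBd0 : 0 < |B.det| := abs_pos.mpr hB0
      have hEij : |E i j| = |B.det| / d := by
        rw [hdet, abs_mul, hd, mul_div_assoc, mul_comm, div_mul_cancel₀ _ (abs_ne_zero.mpr hdU)]
      have hk_lt : ∀ k : Fin (r+1), k.1 < n := fun k => lt_of_le_of_lt (Nat.lt_succ_iff.mp k.2) hrn
      have hinter : ∀ k : Fin (r+1),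
          evs B (Fin.rev k) ≤ evs A (Fin.rev (⟨k.1, hk_lt k⟩ : Fin n)) := fun k => by
        rw [hB]
        exact evs_submatrix_le A _ _ hIp hJp k (hk_lt k)
      have hBpos : ∀ jj, 0 < evs B jj := evs_pos_of_det_ne_zero hB0
      have hApos : ∀ k : Fin (r+1), 0 < evs A (Fin.rev (⟨k.1, hk_lt k⟩ : Fin n)) :=
        fun k => lt_of_lt_of_le (hBpos _) (hinter k)
      have hsq : ∀ (k : Fin n), sval A k ^ 2 = evs A (Fin.rev k) :=
        fun k => Real.sq_sqrt (evs_nonneg A _)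
      have hσ2eq : σ ^ 2 = evs A (Fin.rev (⟨r, hrn⟩ : Fin n)) := hsq ⟨r, hrn⟩
      have hσ2pos : 0 < σ ^ 2 := by
        rw [hσ2eq]
        exact hApos (Fin.last r)
      have hσpos : 0 < σ :=
        lt_of_le_of_ne hσ0 (fun h => by rw [← h] at hσ2pos; simp at hσ2pos)
      have hsvalpos : ∀ k : Fin r, 0 < sval A ⟨k.1, lt_trans k.2 hrn⟩ ^ 2 := by
        intro k
        rw [hsq ⟨k.1, lt_trans k.2 hrn⟩]
        exact hApos (Fin.castSucc k)
      have hsplit : ∑ k : Fin (r+1), (evs A (Fin.rev (⟨k.1, hk_lt k⟩ : Fin n)))⁻¹ = S / σ ^ 2 := by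
        have hrhs : S / σ ^ 2
            = (∑ k : Fin r, (sval A ⟨k.1, lt_trans k.2 hrn⟩ ^ 2)⁻¹) + (σ ^ 2)⁻¹ := by
          rw [hSdef, add_div, Finset.sum_div, one_div, add_comm]
          congr 1
          refine Finset.sum_congr rfl fun k _ => ?_
          rw [div_right_comm, div_self (ne_of_gt hσ2pos), one_div]
        rw [Fin.sum_univ_castSucc, hrhs]
        congr 1
        · exact Finset.sum_congr rfl fun k _ =>
            congrArg Inv.inv (hsq ⟨k.1, lt_trans k.2 hrn⟩).symm
        · exact congrArg Inv.inv (hsq ⟨r, hrn⟩).symm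
      have hsum2 : S / σ ^ 2 ≤ ∑ k : Fin (r+1), (evs B (Fin.rev k))⁻¹ := by
        rw [← hsplit]
        exact Finset.sum_le_sum fun k _ => inv_anti₀ (hBpos _) (hinter k)
      have h0eig : ∀ ii, (Matrix.isHermitian_transpose_mul_self B).eigenvalues ii ≠ 0 := by
        intro ii
        have h := hBpos ((Tuple.sort (Matrix.isHermitian_transpose_mul_self B).eigenvalues).symm ii)
        simp only [evs] at h
        rw [Equiv.apply_symm_apply] at h
        exact ne_of_gt h
      have hF2 : ∑ k, ∑ l, (B⁻¹ k l) ^ 2 = ∑ k : Fin (r+1), (evs B (Fin.rev k))⁻¹ := by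
        rw [← trace_inv_gram,
          hermitian_trace_inv (Matrix.isHermitian_transpose_mul_self B) h0eig, sum_inv_eigs_eq]
      have hinvE : ∀ k l : Fin (r+1), |B⁻¹ k l| ≤ d / |B.det| := by
        intro k l
        have hadj : B⁻¹ k l = (B.det)⁻¹ * B.adjugate k l := by
          rw [Matrix.inv_def, Matrix.smul_apply, Ring.inverse_eq_inv, smul_eq_mul]
        rw [hadj, abs_mul, abs_inv]
        rw [Matrix.adjugate_fin_succ_eq_det_submatrix, abs_mul, abs_pow, abs_neg, abs_one,
          one_pow, one_mul]
        have hless : |(B.submatrix l.succAbove k.succAbove).det| ≤ d := by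
          rw [hB, Matrix.submatrix_submatrix, hd]
          exact hmax _ _ (hIp.comp Fin.succAbove_right_injective)
            (hJp.comp Fin.succAbove_right_injective)
        calc |B.det|⁻¹ * |(B.submatrix l.succAbove k.succAbove).det|
            ≤ |B.det|⁻¹ * d :=
              mul_le_mul_of_nonneg_left hless (inv_nonneg.mpr (abs_nonneg _))
          _ = d / |B.det| := by rw [div_eq_mul_inv, mul_comm]
      have hF2le : ∑ k, ∑ l, (B⁻¹ k l) ^ 2 ≤ (↑r + 1) ^ 2 * (d / |B.det|) ^ 2 := by
        calc ∑ k, ∑ l, (B⁻¹ k l) ^ 2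
            ≤ ∑ (_ : Fin (r+1)), ∑ (_ : Fin (r+1)), (d / |B.det|) ^ 2 := by
              refine Finset.sum_le_sum fun k _ => Finset.sum_le_sum fun l _ => ?_
              rw [← sq_abs]
              exact pow_le_pow_left₀ (abs_nonneg _) (hinvE k l) 2
          _ = (↑r + 1) ^ 2 * (d / |B.det|) ^ 2 := by
              simp [Finset.sum_const, Finset.card_univ]
              ring
      have hmain : S / σ ^ 2 ≤ (↑r + 1) ^ 2 * (d / |B.det|) ^ 2 :=
        le_trans (le_trans hsum2 (le_of_eq hF2.symm)) hF2le
      rw [hEij, div_le_div_iff₀ hd0 hsqrtS]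
      have hS_le : S ≤ ((↑r + 1) * σ * d / |B.det|) ^ 2 := by
        have h1 : S ≤ (↑r + 1) ^ 2 * (d / |B.det|) ^ 2 * σ ^ 2 :=
          (div_le_iff₀ hσ2pos).mp hmain
        calc S ≤ (↑r + 1) ^ 2 * (d / |B.det|) ^ 2 * σ ^ 2 := h1
          _ = ((↑r + 1) * σ * d / |B.det|) ^ 2 := by
            field_simp
      have hsq' : Real.sqrt S ≤ (↑r + 1) * σ * d / |B.det| := by
        have hnn : (0:ℝ) ≤ (↑r + 1) * σ * d / |B.det| :=
          div_nonneg (mul_nonneg (mul_nonneg (by positivity : (0:ℝ) ≤ ↑r + 1) hσ0)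
            (le_of_lt hd0)) (abs_nonneg _)
        calc Real.sqrt S ≤ Real.sqrt (((↑r + 1) * σ * d / |B.det|) ^ 2) :=
              Real.sqrt_le_sqrt hS_le
          _ = (↑r + 1) * σ * d / |B.det| := Real.sqrt_sq hnn
      calc |B.det| * Real.sqrt S
          ≤ |B.det| * ((↑r + 1) * σ * d / |B.det|) :=
            mul_le_mul_of_nonneg_left hsq' (abs_nonneg _)
        _ = (↑r + 1) * σ * d := by field_simp
  haveI : Nonempty (Fin m) := ⟨⟨0, hm0⟩⟩
  haveI : Nonempty (Fin n) := ⟨⟨0, hn0⟩⟩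
  show (⨆ i, ⨆ j, |E i j|) ≤ (↑r + 1) * σ / Real.sqrt S
  exact ciSup_le fun i => ciSup_le fun j => hentry i j
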